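/- Let r ≥ 2 be an even integer, ν ≥ 1 an integer, M = rν, N ≥ 0, x ∈ ℂ, and let e_0 < e_1 < … < e_{r−1} be integers with 0 ≤ e_0 and e_{r−1} < M such that N − e_j + iν ≡ 0 (mod 2) for all 0 ≤ i,j ≤ r−1. With equidistant starting points a_i = iν for 0 ≤ i ≤ r−1, one has det( q(rν, N, iν, e_j; x, −1) )_{i,j=0}^{r−1} = i^{−r(r−1)/2} · (ν√r)^{−r} · det( Σ_{a=0}^{ν−1} exp( πi(N − e_j(2(i+ar)+1))/(rν) ) · ( x·exp(−2πi(i+ar+1)/(rν)) + exp(2πi(i+ar)/(rν)) )^N )_{i,j=0}^{r−1}. -/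

import Mathlib

open Finset Complex Real

/-- The generating function `q(M,N,a,e;x)`. -/
noncomputable def qx (M N : ℕ) (a e : ℤ) (x : ℂ) : ℂ :=
  ∑ d ∈ Finset.range (N + 1),
    if (M : ℤ) ∣ (a + (N : ℤ) - 2 * (d : ℤ) - e) then (N.choose d : ℂ) * x ^ d else 0

/-- The generating function `q(M,N,a,e;x,y)`. -/
noncomputable def qxy (M N : ℕ) (a e : ℤ) (x y : ℂ) : ℂ :=
  ∑ d ∈ Finset.range (N + 1),
    if (M : ℤ) ∣ (a + (N : ℤ) - 2 * (d : ℤ) - e) then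
      (N.choose d : ℂ) * x ^ d * y ^ ((a + (N : ℤ) - 2 * (d : ℤ) - e) / (M : ℤ))
    else 0

private lemma sum_range_mul_split {α : Type*} [AddCommMonoid α] (f : ℕ → α) (r ν : ℕ) :
    ∑ k ∈ Finset.range (r * ν), f k
      = ∑ a ∈ Finset.range ν, ∑ i ∈ Finset.range r, f (i + a * r) := by
  induction ν with
  | zero => simp
  | succ n ih =>
      rw [Nat.mul_succ, Finset.sum_range_add, ih, Finset.sum_range_succ]
      congr 1
      exact Finset.sum_congr rfl fun i _ => by rw [add_comm, mul_comm]

private lemma geom_exp_sum (n : ℕ) (hn : 0 < n) (t : ℤ) :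
    ∑ k ∈ Finset.range n, Complex.exp (2 * Real.pi * Complex.I * t / n) ^ k
      = if (n : ℤ) ∣ t then (n : ℂ) else 0 := by
  have hn' : (n : ℂ) ≠ 0 := Nat.cast_ne_zero.2 hn.ne'
  by_cases h : (n : ℤ) ∣ t
  · obtain ⟨s, rfl⟩ := h
    rw [if_pos ⟨s, rfl⟩]
    have harg : (2 * Real.pi * Complex.I * ((n : ℤ) * s : ℤ) / n : ℂ)
        = (s : ℤ) * (2 * Real.pi * Complex.I) := by
      push_cast
      field_simp
    rw [harg, Complex.exp_int_mul_two_pi_mul_I]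
    simp
  · rw [if_neg h]
    have hz1 : Complex.exp (2 * Real.pi * Complex.I * t / n) ≠ 1 := by
      rw [Ne, Complex.exp_eq_one_iff]
      rintro ⟨m, hm⟩
      apply h
      refine ⟨m, ?_⟩
      have h2 : (2 * Real.pi * Complex.I : ℂ) ≠ 0 := by
        simp [Real.pi_ne_zero, Complex.I_ne_zero]
      have key : (t : ℂ) * (2 * Real.pi * Complex.I)
          = (((n : ℤ) * m : ℤ) : ℂ) * (2 * Real.pi * Complex.I) := by
        push_cast
        field_simp at hm
        linear_combination (2 * Real.pi * Complex.I) * hm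
      have : (t : ℂ) = (((n : ℤ) * m : ℤ) : ℂ) := mul_right_cancel₀ h2 key
      exact_mod_cast this
    rw [geom_sum_eq hz1]
    have hzn : Complex.exp (2 * Real.pi * Complex.I * t / n) ^ n = 1 := by
      rw [← Complex.exp_nat_mul]
      have harg : (n : ℂ) * (2 * Real.pi * Complex.I * t / n)
          = (t : ℤ) * (2 * Real.pi * Complex.I) := by
        push_cast; field_simp
      rw [harg, Complex.exp_int_mul_two_pi_mul_I]
    rw [hzn]
    simp

private lemma w_pow_sum (M : ℕ) (hM : 0 < M) (t : ℤ) :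
    ∑ k ∈ Finset.range M, Complex.exp (Real.pi * Complex.I * (2 * k + 1) / M) ^ t
      = if (M : ℤ) ∣ t then (M : ℂ) * (-1 : ℂ) ^ (t / (M : ℤ)) else 0 := by
  have hM' : (M : ℂ) ≠ 0 := Nat.cast_ne_zero.2 hM.ne'
  have key : ∀ k : ℕ, Complex.exp (Real.pi * Complex.I * (2 * k + 1) / M) ^ t
      = Complex.exp (Real.pi * Complex.I * t / M) *
          Complex.exp (2 * Real.pi * Complex.I * t / M) ^ k := by
    intro k
    rw [← Complex.exp_int_mul, ← Complex.exp_nat_mul, ← Complex.exp_add]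
    congr 1
    field_simp
    ring
  simp only [key, ← Finset.mul_sum]
  rw [geom_exp_sum M hM t]
  by_cases h : (M : ℤ) ∣ t
  · obtain ⟨s, rfl⟩ := h
    rw [if_pos ⟨s, rfl⟩, if_pos ⟨s, rfl⟩]
    have h1 : (Real.pi * Complex.I * ((M : ℤ) * s : ℤ) / M : ℂ)
        = (s : ℤ) * (Real.pi * Complex.I) := by
      push_cast; field_simp
    rw [h1, Int.mul_ediv_cancel_left _ (by exact_mod_cast hM.ne' : (M : ℤ) ≠ 0),
      Complex.exp_int_mul, Complex.exp_pi_mul_I]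
    ring
  · simp [h]

private lemma qxy_eq (M N : ℕ) (hM : 0 < M) (a e : ℤ) (x : ℂ) :
    qxy M N a e x (-1)
      = (M : ℂ)⁻¹ * ∑ k ∈ Finset.range M,
          Complex.exp (Real.pi * Complex.I * (2 * k + 1) / M) ^ (a - e) *
            (x * (Complex.exp (Real.pi * Complex.I * (2 * k + 1) / M))⁻¹ +
              Complex.exp (Real.pi * Complex.I * (2 * k + 1) / M)) ^ N := by
  have hM' : (M : ℂ) ≠ 0 := Nat.cast_ne_zero.2 hM.ne'
  have hw : ∀ k : ℕ, Complex.exp (Real.pi * Complex.I * (2 * k + 1) / M) ≠ 0 :=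
    fun k => Complex.exp_ne_zero _
  set w : ℕ → ℂ := fun k => Complex.exp (Real.pi * Complex.I * (2 * k + 1) / M) with hwdef
  have expand : ∀ k : ℕ, w k ^ (a - e) * (x * (w k)⁻¹ + w k) ^ N
      = ∑ d ∈ Finset.range (N + 1),
          (N.choose d : ℂ) * x ^ d * w k ^ (a + (N : ℤ) - 2 * d - e) := by
    intro k
    rw [add_pow, Finset.mul_sum]
    refine Finset.sum_congr rfl fun d hd => ?_
    have hdN : d ≤ N := Nat.lt_succ_iff.mp (Finset.mem_range.mp hd)
    have h1 : ((w k)⁻¹) ^ d = w k ^ (-(d : ℤ)) := by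
      rw [inv_pow, ← zpow_natCast, ← zpow_neg]
    have h2 : w k ^ (N - d) = w k ^ ((N : ℤ) - d) := by
      rw [← zpow_natCast]
      congr 1
      omega
    have h3 : a + (N : ℤ) - 2 * d - e = (a - e) + (-(d : ℤ)) + ((N : ℤ) - d) := by ring
    rw [mul_pow, h1, h2, h3, zpow_add₀ (hw k), zpow_add₀ (hw k)]
    ring
  simp only [hwdef] at expand ⊢
  simp only [expand]
  rw [Finset.sum_comm]
  unfold qxy
  rw [Finset.mul_sum]
  refine Finset.sum_congr rfl fun d _ => ?_
  rw [← Finset.mul_sum, w_pow_sum M hM (a + (N : ℤ) - 2 * d - e)]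
  by_cases h : (M : ℤ) ∣ (a + (N : ℤ) - 2 * d - e)
  · rw [if_pos h, if_pos h]
    field_simp
  · rw [if_neg h, if_neg h]
    ring

private lemma term_eq (r ν N : ℕ) (hr : 0 < r) (hν : 0 < ν) (x : ℂ) (ej : ℤ)
    (i i' a : ℕ) :
    Complex.exp (Real.pi * Complex.I * (2 * ((i' + a * r : ℕ) : ℂ) + 1) / ((r * ν : ℕ) : ℂ)) ^
        (((i * ν : ℕ) : ℤ) - ej) *
      (x * (Complex.exp (Real.pi * Complex.I * (2 * ((i' + a * r : ℕ) : ℂ) + 1) /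
              ((r * ν : ℕ) : ℂ)))⁻¹ +
        Complex.exp (Real.pi * Complex.I * (2 * ((i' + a * r : ℕ) : ℂ) + 1) /
          ((r * ν : ℕ) : ℂ))) ^ N
    = Complex.exp (Real.pi * Complex.I * (2 * (i' : ℂ) + 1) * (i : ℂ) / (r : ℂ)) *
        (Complex.exp (Real.pi * Complex.I *
              ((N : ℂ) - (ej : ℂ) * (2 * ((i' : ℂ) + (a : ℂ) * (r : ℂ)) + 1)) /
              ((r : ℂ) * (ν : ℂ))) *
          (x * Complex.exp (-2 * Real.pi * Complex.I *
                ((i' : ℂ) + (a : ℂ) * (r : ℂ) + 1) / ((r : ℂ) * (ν : ℂ))) +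
            Complex.exp (2 * Real.pi * Complex.I *
                ((i' : ℂ) + (a : ℂ) * (r : ℂ)) / ((r : ℂ) * (ν : ℂ)))) ^ N) := by
  have hr' : (r : ℂ) ≠ 0 := Nat.cast_ne_zero.2 hr.ne'
  have hν' : (ν : ℂ) ≠ 0 := Nat.cast_ne_zero.2 hν.ne'
  set z : ℂ := Real.pi * Complex.I * (2 * ((i' + a * r : ℕ) : ℂ) + 1) / ((r * ν : ℕ) : ℂ)
    with hz
  have hw : Complex.exp z ≠ 0 := Complex.exp_ne_zero _
  -- split the zpow
  have step1 : Complex.exp z ^ (((i * ν : ℕ) : ℤ) - ej)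
      = Complex.exp z ^ (i * ν : ℕ) * Complex.exp z ^ (-ej) := by
    rw [← zpow_natCast (Complex.exp z) (i * ν), ← zpow_add₀ hw, sub_eq_add_neg]
  -- the nat-power part is the P entry
  have step2 : Complex.exp z ^ (i * ν : ℕ)
      = Complex.exp (Real.pi * Complex.I * (2 * (i' : ℂ) + 1) * (i : ℂ) / (r : ℂ)) := by
    rw [← Complex.exp_nat_mul]
    have harg : ((i * ν : ℕ) : ℂ) * z
        = Real.pi * Complex.I * (2 * (i' : ℂ) + 1) * (i : ℂ) / (r : ℂ)
            + ((a * i : ℕ) : ℤ) * (2 * Real.pi * Complex.I) := by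
      rw [hz]; push_cast; field_simp; ring
    rw [harg, Complex.exp_add, Complex.exp_int_mul_two_pi_mul_I, mul_one]
  have step3 : Complex.exp z ^ (-ej) = Complex.exp ((-ej : ℤ) * z) := by
    rw [Complex.exp_int_mul]
  have base : x * Complex.exp (-2 * Real.pi * Complex.I *
                ((i' : ℂ) + (a : ℂ) * (r : ℂ) + 1) / ((r : ℂ) * (ν : ℂ))) +
            Complex.exp (2 * Real.pi * Complex.I *
                ((i' : ℂ) + (a : ℂ) * (r : ℂ)) / ((r : ℂ) * (ν : ℂ)))
      = Complex.exp (-(Real.pi * Complex.I) / ((r : ℂ) * (ν : ℂ))) *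
          (x * (Complex.exp z)⁻¹ + Complex.exp z) := by
    have e1 : Complex.exp (-2 * Real.pi * Complex.I *
          ((i' : ℂ) + (a : ℂ) * (r : ℂ) + 1) / ((r : ℂ) * (ν : ℂ)))
        = Complex.exp (-(Real.pi * Complex.I) / ((r : ℂ) * (ν : ℂ))) * (Complex.exp z)⁻¹ := by
      rw [← Complex.exp_neg, ← Complex.exp_add]
      congr 1
      rw [hz]; push_cast; field_simp; ring
    have e2 : Complex.exp (2 * Real.pi * Complex.I *
          ((i' : ℂ) + (a : ℂ) * (r : ℂ)) / ((r : ℂ) * (ν : ℂ)))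
        = Complex.exp (-(Real.pi * Complex.I) / ((r : ℂ) * (ν : ℂ))) * Complex.exp z := by
      rw [← Complex.exp_add]
      congr 1
      rw [hz]; push_cast; field_simp; ring
    rw [e1, e2]
    ring
  have expfac : Complex.exp (Real.pi * Complex.I *
          ((N : ℂ) - (ej : ℂ) * (2 * ((i' : ℂ) + (a : ℂ) * (r : ℂ)) + 1)) /
          ((r : ℂ) * (ν : ℂ)))
      = Complex.exp ((N : ℂ) * (Real.pi * Complex.I) / ((r : ℂ) * (ν : ℂ))) *
          Complex.exp ((-ej : ℤ) * z) := by
    rw [← Complex.exp_add]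
    congr 1
    rw [hz]; push_cast; field_simp; ring
  rw [step1, step2, step3, base, expfac, mul_pow, ← Complex.exp_nat_mul]
  have cancel : Complex.exp ((N : ℂ) * (Real.pi * Complex.I) / ((r : ℂ) * (ν : ℂ))) *
      Complex.exp ((N : ℂ) * (-(Real.pi * Complex.I) / ((r : ℂ) * (ν : ℂ)))) = 1 := by
    rw [← Complex.exp_add, show (N : ℂ) * (Real.pi * Complex.I) / ((r : ℂ) * (ν : ℂ))
        + (N : ℂ) * (-(Real.pi * Complex.I) / ((r : ℂ) * (ν : ℂ))) = 0 from by ring,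
      Complex.exp_zero]
  linear_combination -(Complex.exp (Real.pi * Complex.I * (2 * (i' : ℂ) + 1) * (i : ℂ) / (r : ℂ)) *
      Complex.exp ((-ej : ℤ) * z) * (x * (Complex.exp z)⁻¹ + Complex.exp z) ^ N) * cancel

private lemma cardc (r : ℕ) : ∑ i : Fin r, (Finset.Ioi i).card = r * (r - 1) / 2 := by
  simp only [Fin.card_Ioi]
  rw [Fin.sum_univ_eq_sum_range (fun k => r - 1 - k) r,
    Finset.sum_range_reflect (fun k => k) r, Finset.sum_range_id]


private lemma two_dvd_rr (r : ℕ) : 2 ∣ r * (r - 1) := by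
  rcases Nat.eq_zero_or_pos r with h | h
  · simp [h]
  · have h2 := Nat.even_mul_succ_self (r - 1)
    rw [Nat.sub_add_cancel h] at h2
    rw [mul_comm]
    exact h2.two_dvd

private lemma hc2 (r : ℕ) : ((r * (r - 1) / 2 : ℕ) : ℤ) * 2 = (r : ℤ) * ((r : ℤ) - 1) := by
  have h := Nat.div_mul_cancel (two_dvd_rr r)
  rcases Nat.eq_zero_or_pos r with h0 | h0
  · simp [h0]
  · have h1 : ((r * (r - 1) / 2 * 2 : ℕ) : ℤ) = ((r * (r - 1) : ℕ) : ℤ) :=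
      congrArg (Nat.cast : ℕ → ℤ) h
    rw [show ((r * (r - 1) : ℕ) : ℤ) = (r : ℤ) * ((r : ℤ) - 1) from by
      push_cast [Nat.cast_sub h0]; ring] at h1
    exact_mod_cast h1

private lemma pairsum (r : ℕ) :
    ∑ i : Fin r, ∑ j ∈ Finset.Ioi i, ((i : ℕ) + (j : ℕ) + 1) = r * (r * (r - 1) / 2) := by
  have key : ((∑ i : Fin r, ∑ j ∈ Finset.Ioi i, ((i : ℕ) + (j : ℕ) + 1) : ℕ) : ℤ)
      = (r : ℤ) * ((r * (r - 1) / 2 : ℕ) : ℤ) := by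
    push_cast
    have split : ∀ i : Fin r, ∑ j ∈ Finset.Ioi i, (((i : ℕ) : ℤ) + ((j : ℕ) : ℤ) + 1)
        = ((r : ℤ) - 1 - (i : ℕ)) * (((i : ℕ) : ℤ) + 1) + ∑ j ∈ Finset.Ioi i, ((j : ℕ) : ℤ) := by
      intro i
      rw [show (fun j : Fin r => (((i : ℕ) : ℤ) + ((j : ℕ) : ℤ) + 1))
          = (fun j : Fin r => ((((i : ℕ) : ℤ) + 1) + ((j : ℕ) : ℤ))) from funext fun j => by ring]
      rw [Finset.sum_add_distrib, Finset.sum_const, Fin.card_Ioi, nsmul_eq_mul]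
      have hcast : ((r - 1 - (i : ℕ) : ℕ) : ℤ) = (r : ℤ) - 1 - ((i : ℕ) : ℤ) := by
        have := i.isLt
        push_cast [Nat.cast_sub (by omega : (i : ℕ) ≤ r - 1), Nat.cast_sub (by omega : 1 ≤ r)]
        ring
      rw [hcast]
    simp only [split]
    rw [Finset.sum_add_distrib]
    have swap : ∑ i : Fin r, ∑ j ∈ Finset.Ioi i, ((j : ℕ) : ℤ)
        = ∑ j : Fin r, ∑ i ∈ Finset.Iio j, ((j : ℕ) : ℤ) :=
      Finset.sum_comm' fun i j => by simp [Finset.mem_Ioi, Finset.mem_Iio, and_comm]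
    rw [swap]
    simp only [Finset.sum_const, Fin.card_Iio, nsmul_eq_mul]
    rw [Fin.sum_univ_eq_sum_range (fun k => ((r : ℤ) - 1 - k) * (k + 1)) r,
      Fin.sum_univ_eq_sum_range (fun k => (k : ℤ) * k) r, ← Finset.sum_add_distrib]
    have hG : (∑ k ∈ Finset.range r, (k : ℤ)) * 2 = (r : ℤ) * ((r : ℤ) - 1) := by
      have h := Finset.sum_range_id_mul_two r
      rcases Nat.eq_zero_or_pos r with h0 | h0
      · simp [h0]
      · have h1 : (((∑ i ∈ Finset.range r, i) * 2 : ℕ) : ℤ) = ((r * (r - 1) : ℕ) : ℤ) :=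
          congrArg (Nat.cast : ℕ → ℤ) h
        rw [show ((r * (r - 1) : ℕ) : ℤ) = (r : ℤ) * ((r : ℤ) - 1) from by
          push_cast [Nat.cast_sub h0]; ring] at h1
        push_cast at h1 ⊢
        linarith [h1]
    have expand : ∀ k ∈ Finset.range r,
        ((r : ℤ) - 1 - k) * (k + 1) + (k : ℤ) * k = ((r : ℤ) - 2) * k + ((r : ℤ) - 1) := by
      intro k _; ring
    rw [Finset.sum_congr rfl expand, Finset.sum_add_distrib, ← Finset.mul_sum,
      Finset.sum_const, Finset.card_range, nsmul_eq_mul]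
    have h2 := hc2 r
    have goal2 : (((r : ℤ) - 2) * ∑ k ∈ Finset.range r, (k : ℤ) + (r : ℤ) * ((r : ℤ) - 1)) * 2
        = ((r : ℤ) * ((r * (r - 1) / 2 : ℕ) : ℤ)) * 2 := by
      linear_combination ((r : ℤ) - 2) * hG - (r : ℤ) * h2
    exact mul_right_cancel₀ (two_ne_zero' ℤ) goal2
  exact_mod_cast key


private lemma factor_eq (r : ℕ) (hr : 0 < r) (i j : Fin r) (hij : i < j) :
    Complex.exp (Real.pi * Complex.I * (2 * (j : ℂ) + 1) / (r : ℂ)) -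
        Complex.exp (Real.pi * Complex.I * (2 * (i : ℂ) + 1) / (r : ℂ))
      = Complex.I * Complex.exp (Real.pi * Complex.I / (r : ℂ)) ^ ((i : ℕ) + (j : ℕ) + 1) *
          ((2 * Real.sin (Real.pi * (((j : ℕ) : ℝ) - ((i : ℕ) : ℝ)) / (r : ℝ)) : ℝ) : ℂ) := by
  have hr' : (r : ℂ) ≠ 0 := Nat.cast_ne_zero.2 hr.ne'
  set θ : ℝ := Real.pi * (((j : ℕ) : ℝ) - ((i : ℕ) : ℝ)) / (r : ℝ) with hθ
  have hsin : ((2 * Real.sin θ : ℝ) : ℂ) = 2 * Complex.sin (θ : ℂ) := by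
    push_cast [Complex.ofReal_sin]
    ring
  have hkey : Complex.I * (2 * Complex.sin (θ : ℂ))
      = Complex.exp ((θ : ℂ) * Complex.I) - Complex.exp (-(θ : ℂ) * Complex.I) := by
    rw [Complex.sin]
    ring_nf
    rw [Complex.I_sq]
    ring
  have hu : Complex.exp (Real.pi * Complex.I / (r : ℂ)) ^ ((i : ℕ) + (j : ℕ) + 1)
      = Complex.exp ((((i : ℕ) + (j : ℕ) + 1 : ℕ) : ℂ) * (Real.pi * Complex.I / (r : ℂ))) := by
    rw [Complex.exp_nat_mul]
  rw [hsin, hu]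
  rw [show Complex.I * Complex.exp ((((i : ℕ) + (j : ℕ) + 1 : ℕ) : ℂ) * (Real.pi * Complex.I / (r : ℂ))) *
        (2 * Complex.sin (θ : ℂ))
      = Complex.exp ((((i : ℕ) + (j : ℕ) + 1 : ℕ) : ℂ) * (Real.pi * Complex.I / (r : ℂ))) *
        (Complex.I * (2 * Complex.sin (θ : ℂ))) from by ring, hkey, mul_sub,
    ← Complex.exp_add, ← Complex.exp_add]
  have hθc : ((θ : ℝ) : ℂ) = Real.pi * (((j : ℕ) : ℂ) - ((i : ℕ) : ℂ)) / (r : ℂ) := by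
    rw [hθ]; push_cast; ring
  congr 1
  · congr 1
    rw [hθc]; field_simp; push_cast; ring
  · congr 1
    rw [hθc]; field_simp; push_cast; ring

private lemma detP_form (r : ℕ) (hr : 0 < r) :
    (Matrix.of fun i i' : Fin r =>
        Complex.exp (Real.pi * Complex.I * (2 * (i' : ℂ) + 1) * (i : ℂ) / (r : ℂ))).det
      = Complex.I ^ (3 * (r * (r - 1) / 2)) *
          ((∏ i : Fin r, ∏ j ∈ Finset.Ioi i,
            (2 * Real.sin (Real.pi * (((j : ℕ) : ℝ) - ((i : ℕ) : ℝ)) / (r : ℝ)) : ℝ) : ℝ) : ℂ) := by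
  have hr' : (r : ℂ) ≠ 0 := Nat.cast_ne_zero.2 hr.ne'
  have htrans : (Matrix.of fun i i' : Fin r =>
        Complex.exp (Real.pi * Complex.I * (2 * (i' : ℂ) + 1) * (i : ℂ) / (r : ℂ)))
      = (Matrix.vandermonde fun i' : Fin r =>
          Complex.exp (Real.pi * Complex.I * (2 * (i' : ℂ) + 1) / (r : ℂ))).transpose := by
    ext i i'
    simp only [Matrix.of_apply, Matrix.transpose_apply, Matrix.vandermonde_apply]
    rw [← Complex.exp_nat_mul]
    congr 1
    field_simp
  rw [htrans, Matrix.det_transpose, Matrix.det_vandermonde]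
  have hfac : ∀ i : Fin r, ∀ j ∈ Finset.Ioi i,
      Complex.exp (Real.pi * Complex.I * (2 * (j : ℂ) + 1) / (r : ℂ)) -
          Complex.exp (Real.pi * Complex.I * (2 * (i : ℂ) + 1) / (r : ℂ))
        = Complex.I * Complex.exp (Real.pi * Complex.I / (r : ℂ)) ^ ((i : ℕ) + (j : ℕ) + 1) *
            ((2 * Real.sin (Real.pi * (((j : ℕ) : ℝ) - ((i : ℕ) : ℝ)) / (r : ℝ)) : ℝ) : ℂ) :=
    fun i j hj => factor_eq r hr i j (Finset.mem_Ioi.mp hj)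
  rw [Finset.prod_congr rfl fun i _ => Finset.prod_congr rfl (hfac i)]
  simp only [Finset.prod_mul_distrib, Finset.prod_const, Finset.prod_pow_eq_pow_sum]
  rw [cardc r, pairsum r]
  have hupow : Complex.exp (Real.pi * Complex.I / (r : ℂ)) ^ (r * (r * (r - 1) / 2))
      = (-1 : ℂ) ^ (r * (r - 1) / 2) := by
    rw [pow_mul, ← Complex.exp_nat_mul,
      show (r : ℂ) * (Real.pi * Complex.I / (r : ℂ)) = Real.pi * Complex.I from by field_simp,
      Complex.exp_pi_mul_I]
  rw [hupow]
  have h3 : Complex.I ^ (r * (r - 1) / 2) * (-1 : ℂ) ^ (r * (r - 1) / 2)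
      = Complex.I ^ (3 * (r * (r - 1) / 2)) := by
    rw [← mul_pow, pow_mul]
    congr 1
    rw [pow_succ, Complex.I_sq]
    ring
  push_cast
  simp only [Finset.prod_mul_distrib, Finset.prod_const, Finset.prod_pow_eq_pow_sum, cardc r]
  rw [← h3]

private lemma sinprod (r : ℕ) (hr : 0 < r) :
    ∏ i : Fin r, ∏ j ∈ Finset.Ioi i,
      (2 * Real.sin (Real.pi * (((j : ℕ) : ℝ) - ((i : ℕ) : ℝ)) / (r : ℝ)))
    = Real.sqrt r ^ r := by
  set T : ℝ := ∏ i : Fin r, ∏ j ∈ Finset.Ioi i,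
      (2 * Real.sin (Real.pi * (((j : ℕ) : ℝ) - ((i : ℕ) : ℝ)) / (r : ℝ))) with hT
  have hTpos : 0 < T := by
    refine Finset.prod_pos fun i _ => Finset.prod_pos fun j hj => ?_
    have hijf : i < j := Finset.mem_Ioi.mp hj
    have hij : (i : ℕ) < (j : ℕ) := hijf
    have hjr : (j : ℕ) < r := j.isLt
    have h1 : 0 < Real.pi * (((j : ℕ) : ℝ) - ((i : ℕ) : ℝ)) / (r : ℝ) := by
      have : (0 : ℝ) < ((j : ℕ) : ℝ) - ((i : ℕ) : ℝ) := by
        have : ((i : ℕ) : ℝ) < ((j : ℕ) : ℝ) := by exact_mod_cast hij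
        linarith
      have hrpos : (0 : ℝ) < (r : ℝ) := by exact_mod_cast hr
      positivity
    have h2 : Real.pi * (((j : ℕ) : ℝ) - ((i : ℕ) : ℝ)) / (r : ℝ) < Real.pi := by
      have hrpos : (0 : ℝ) < (r : ℝ) := by exact_mod_cast hr
      rw [div_lt_iff₀ hrpos]
      have hd : ((j : ℕ) : ℝ) - ((i : ℕ) : ℝ) < (r : ℝ) := by
        have : ((j : ℕ) : ℝ) < (r : ℝ) := by exact_mod_cast hjr
        have : (0 : ℝ) ≤ ((i : ℕ) : ℝ) := by positivity
        linarith
      nlinarith [Real.pi_pos]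
    linarith [Real.sin_pos_of_pos_of_lt_pi h1 h2, Real.sin_pos_of_pos_of_lt_pi h1 h2]
  -- unitarity
  set P : Matrix (Fin r) (Fin r) ℂ := Matrix.of fun i i' : Fin r =>
      Complex.exp (Real.pi * Complex.I * (2 * (i' : ℂ) + 1) * (i : ℂ) / (r : ℂ)) with hP
  have hmul : P * P.conjTranspose = (r : ℂ) • (1 : Matrix (Fin r) (Fin r) ℂ) := by
    ext i i''
    simp only [hP, Matrix.mul_apply, Matrix.conjTranspose_apply, Matrix.of_apply,
      Matrix.smul_apply, Matrix.one_apply, smul_eq_mul]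
    have hterm : ∀ k : Fin r,
        Complex.exp (Real.pi * Complex.I * (2 * (k : ℂ) + 1) * (i : ℂ) / (r : ℂ)) *
          star (Complex.exp (Real.pi * Complex.I * (2 * (k : ℂ) + 1) * (i'' : ℂ) / (r : ℂ)))
        = Complex.exp (Real.pi * Complex.I * (2 * ((k : ℕ) : ℂ) + 1) / (r : ℂ)) ^
            (((i : ℕ) : ℤ) - ((i'' : ℕ) : ℤ)) := by
      intro k
      have hstar : star (Complex.exp (Real.pi * Complex.I * (2 * (k : ℂ) + 1) * (i'' : ℂ) / (r : ℂ)))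
          = Complex.exp (-(Real.pi * Complex.I * (2 * (k : ℂ) + 1) * (i'' : ℂ) / (r : ℂ))) := by
        rw [show star (Complex.exp (Real.pi * Complex.I * (2 * (k : ℂ) + 1) * (i'' : ℂ) / (r : ℂ)))
            = (starRingEnd ℂ) (Complex.exp (Real.pi * Complex.I * (2 * (k : ℂ) + 1) * (i'' : ℂ) / (r : ℂ))) from rfl,
          ← Complex.exp_conj]
        congr 1
        simp only [map_div₀, map_mul, map_add, map_ofNat, map_one, Complex.conj_I,
          Complex.conj_ofReal]
        rw [show ((starRingEnd ℂ) ((k : Fin r) : ℂ)) = ((k : Fin r) : ℂ) from by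
            rw [show ((k : Fin r) : ℂ) = (((k : ℕ) : ℝ) : ℂ) from by push_cast; rfl,
              Complex.conj_ofReal],
          show ((starRingEnd ℂ) ((i'' : Fin r) : ℂ)) = ((i'' : Fin r) : ℂ) from by
            rw [show ((i'' : Fin r) : ℂ) = (((i'' : ℕ) : ℝ) : ℂ) from by push_cast; rfl,
              Complex.conj_ofReal],
          show ((starRingEnd ℂ) ((r : ℕ) : ℂ)) = ((r : ℕ) : ℂ) from by
            rw [show ((r : ℕ) : ℂ) = (((r : ℕ) : ℝ) : ℂ) from by push_cast; rfl,
              Complex.conj_ofReal]]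
        ring
      rw [hstar, ← Complex.exp_add, ← Complex.exp_int_mul]
      congr 1
      push_cast
      ring
    rw [Finset.sum_congr rfl fun k _ => hterm k]
    rw [show (∑ k : Fin r, Complex.exp (Real.pi * Complex.I * (2 * ((k : ℕ) : ℂ) + 1) / (r : ℂ)) ^
          (((i : ℕ) : ℤ) - ((i'' : ℕ) : ℤ)))
        = ∑ k ∈ Finset.range r, Complex.exp (Real.pi * Complex.I * (2 * (k : ℂ) + 1) / (r : ℂ)) ^
          (((i : ℕ) : ℤ) - ((i'' : ℕ) : ℤ)) from
      Fin.sum_univ_eq_sum_range (fun k : ℕ => Complex.exp (Real.pi * Complex.I * (2 * (k : ℂ) + 1) / (r : ℂ)) ^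
          (((i : ℕ) : ℤ) - ((i'' : ℕ) : ℤ))) r]
    rw [w_pow_sum r hr (((i : ℕ) : ℤ) - ((i'' : ℕ) : ℤ))]
    by_cases hii : i = i''
    · subst hii
      simp
    · have hne : (((i : ℕ) : ℤ) - ((i'' : ℕ) : ℤ)) ≠ 0 := by
        have : (i : ℕ) ≠ (i'' : ℕ) := fun h => hii (Fin.ext h)
        omega
      have hnd : ¬ ((r : ℤ) ∣ (((i : ℕ) : ℤ) - ((i'' : ℕ) : ℤ))) := by
        intro hdvd
        apply hne
        refine Int.eq_zero_of_dvd_of_natAbs_lt_natAbs hdvd ?_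
        have h1 := i.isLt
        have h2 := i''.isLt
        omega
      rw [if_neg hnd, if_neg hii, mul_zero]
  have hdet := congrArg Matrix.det hmul
  rw [Matrix.det_mul, Matrix.det_conjTranspose, Matrix.det_smul, Matrix.det_one,
    Fintype.card_fin, mul_one] at hdet
  rw [detP_form r hr] at hdet
  have hstarT : star ((T : ℝ) : ℂ) = ((T : ℝ) : ℂ) := Complex.conj_ofReal T
  rw [star_mul', star_pow, hstarT] at hdet
  have hIstar : star Complex.I = -Complex.I := Complex.conj_I
  rw [hIstar] at hdet
  have hsimp : Complex.I ^ (3 * (r * (r - 1) / 2)) * ((T : ℝ) : ℂ) *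
      ((-Complex.I) ^ (3 * (r * (r - 1) / 2)) * ((T : ℝ) : ℂ))
      = (Complex.I * -Complex.I) ^ (3 * (r * (r - 1) / 2)) * (((T : ℝ) : ℂ) * ((T : ℝ) : ℂ)) := by
    rw [mul_pow]
    ring
  rw [hsimp, show Complex.I * -Complex.I = 1 from by
      rw [mul_neg, Complex.I_mul_I, neg_neg], one_pow, one_mul] at hdet
  have hTreal : T * T = (r : ℝ) ^ r := by
    have : (((T * T : ℝ)) : ℂ) = (((r : ℝ) ^ r : ℝ) : ℂ) := by push_cast; exact_mod_cast hdet
    exact_mod_cast this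
  have hs : Real.sqrt r ^ r * (Real.sqrt r ^ r) = (r : ℝ) ^ r := by
    rw [← pow_add, ← two_mul, pow_mul, Real.sq_sqrt (by positivity : (0:ℝ) ≤ (r:ℝ))]
  have hTsq : T ^ 2 = (Real.sqrt r ^ r) ^ 2 := by
    rw [pow_two, pow_two, hTreal, hs]
  have hs0 : (0 : ℝ) ≤ Real.sqrt r ^ r := by positivity
  calc T = Real.sqrt (T ^ 2) := (Real.sqrt_sq hTpos.le).symm
    _ = Real.sqrt ((Real.sqrt r ^ r) ^ 2) := by rw [hTsq]
    _ = Real.sqrt r ^ r := Real.sqrt_sq hs0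

private lemma entry_split (r ν N : ℕ) (hr : 0 < r) (hν : 0 < ν) (x : ℂ) (ej : ℤ) (i : ℕ) :
    qxy (r * ν) N ((i * ν : ℕ) : ℤ) ej x (-1)
      = ∑ i' ∈ Finset.range r,
          Complex.exp (Real.pi * Complex.I * (2 * (i' : ℂ) + 1) * (i : ℂ) / (r : ℂ)) *
            ((((r * ν : ℕ) : ℂ))⁻¹ *
              ∑ a ∈ Finset.range ν,
                Complex.exp (Real.pi * Complex.I *
                    ((N : ℂ) - (ej : ℂ) * (2 * ((i' : ℂ) + (a : ℂ) * (r : ℂ)) + 1)) /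
                    ((r : ℂ) * (ν : ℂ))) *
                  (x * Complex.exp (-2 * Real.pi * Complex.I *
                        ((i' : ℂ) + (a : ℂ) * (r : ℂ) + 1) / ((r : ℂ) * (ν : ℂ))) +
                    Complex.exp (2 * Real.pi * Complex.I *
                        ((i' : ℂ) + (a : ℂ) * (r : ℂ)) / ((r : ℂ) * (ν : ℂ)))) ^ N) := by
  have hM : 0 < r * ν := Nat.mul_pos hr hν
  rw [qxy_eq (r * ν) N hM ((i * ν : ℕ) : ℤ) ej x]
  rw [sum_range_mul_split (fun k => Complex.exp (Real.pi * Complex.I * (2 * (k : ℂ) + 1) /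
      ((r * ν : ℕ) : ℂ)) ^ (((i * ν : ℕ) : ℤ) - ej) *
      (x * (Complex.exp (Real.pi * Complex.I * (2 * (k : ℂ) + 1) / ((r * ν : ℕ) : ℂ)))⁻¹ +
        Complex.exp (Real.pi * Complex.I * (2 * (k : ℂ) + 1) / ((r * ν : ℕ) : ℂ))) ^ N) r ν]
  rw [Finset.sum_comm, Finset.mul_sum]
  refine Finset.sum_congr rfl fun i' _ => ?_
  rw [Finset.sum_congr rfl fun a _ => term_eq r ν N hr hν x ej i i' a, ← Finset.mul_sum]
  ring

/-- equidistant starting points `a i = i·ν`, `M = r·ν`, `r` even: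
`det (q(rν,N,iν,e j;x,-1)) = i^(-r(r-1)/2) (ν√r)^(-r) det(…)`. -/
theorem stmt13 (r ν : ℕ) (hr2 : 2 ≤ r) (hreven : Even r) (hν : 1 ≤ ν) (N : ℕ) (x : ℂ)
    (e : Fin r → ℤ) (hemono : StrictMono e)
    (he0 : 0 ≤ e ⟨0, by omega⟩) (heM : e ⟨r - 1, by omega⟩ < (r : ℤ) * ν)
    (hpar : ∀ i j : Fin r, (2 : ℤ) ∣ ((N : ℤ) - e j + (i : ℕ) * ν)) :
    Matrix.det (Matrix.of fun i j : Fin r =>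
        qxy (r * ν) N ((i : ℕ) * ν) (e j) x (-1))
      = Complex.I ^ (-(((r * (r - 1)) / 2 : ℕ) : ℤ)) *
          ((ν : ℂ) * (Real.sqrt r : ℂ)) ^ (-(r : ℤ)) *
          Matrix.det (Matrix.of fun i j : Fin r =>
            ∑ a ∈ Finset.range ν,
              Complex.exp (Real.pi * Complex.I *
                  ((N : ℂ) - (e j : ℂ) * (2 * (((i : ℕ) : ℂ) + (a : ℂ) * r) + 1)) /
                  ((r : ℂ) * ν)) *
                (x * Complex.exp (-2 * Real.pi * Complex.I *
                      (((i : ℕ) : ℂ) + (a : ℂ) * r + 1) / ((r : ℂ) * ν)) +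
                  Complex.exp (2 * Real.pi * Complex.I *
                      (((i : ℕ) : ℂ) + (a : ℂ) * r) / ((r : ℂ) * ν))) ^ N) := by
  have hr : 0 < r := by omega
  have hν' : 0 < ν := hν
  have hfact : (Matrix.of fun i j : Fin r =>
        qxy (r * ν) N ((i : ℕ) * ν) (e j) x (-1))
      = (Matrix.of fun i i' : Fin r =>
          Complex.exp (Real.pi * Complex.I * (2 * (i' : ℂ) + 1) * (i : ℂ) / (r : ℂ))) *
        ((((r * ν : ℕ) : ℂ))⁻¹ • (Matrix.of fun i j : Fin r =>
            ∑ a ∈ Finset.range ν,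
              Complex.exp (Real.pi * Complex.I *
                  ((N : ℂ) - (e j : ℂ) * (2 * (((i : ℕ) : ℂ) + (a : ℂ) * r) + 1)) /
                  ((r : ℂ) * ν)) *
                (x * Complex.exp (-2 * Real.pi * Complex.I *
                      (((i : ℕ) : ℂ) + (a : ℂ) * r + 1) / ((r : ℂ) * ν)) +
                  Complex.exp (2 * Real.pi * Complex.I *
                      (((i : ℕ) : ℂ) + (a : ℂ) * r) / ((r : ℂ) * ν))) ^ N)) := by
    ext i j
    rw [Matrix.mul_apply]
    simp only [Matrix.of_apply, Matrix.smul_apply, smul_eq_mul]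
    rw [show (((i : ℕ) : ℤ) * (ν : ℤ)) = (((i : ℕ) * ν : ℕ) : ℤ) from by push_cast; ring]
    rw [entry_split r ν N hr hν' x (e j) (i : ℕ)]
    rw [← Fin.sum_univ_eq_sum_range (fun i' : ℕ =>
      Complex.exp (Real.pi * Complex.I * (2 * (i' : ℂ) + 1) * ((i : ℕ) : ℂ) / (r : ℂ)) *
        ((((r * ν : ℕ) : ℂ))⁻¹ *
          ∑ a ∈ Finset.range ν,
            Complex.exp (Real.pi * Complex.I *
                ((N : ℂ) - ((e j : ℤ) : ℂ) * (2 * ((i' : ℂ) + (a : ℂ) * (r : ℂ)) + 1)) /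
                ((r : ℂ) * (ν : ℂ))) *
              (x * Complex.exp (-2 * Real.pi * Complex.I *
                    ((i' : ℂ) + (a : ℂ) * (r : ℂ) + 1) / ((r : ℂ) * (ν : ℂ))) +
                Complex.exp (2 * Real.pi * Complex.I *
                    ((i' : ℂ) + (a : ℂ) * (r : ℂ)) / ((r : ℂ) * (ν : ℂ)))) ^ N)) r]
  rw [hfact, Matrix.det_mul, Matrix.det_smul, Fintype.card_fin, detP_form r hr, sinprod r hr]
  set c : ℕ := r * (r - 1) / 2 with hcdef
  set S : ℂ := ((Real.sqrt r : ℝ) : ℂ) with hS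
  have hsqrtpos : (0 : ℝ) < Real.sqrt r := Real.sqrt_pos.2 (by exact_mod_cast hr)
  have hS0 : S ≠ 0 := by
    rw [hS]
    exact_mod_cast hsqrtpos.ne'
  have hr0 : (r : ℂ) ≠ 0 := Nat.cast_ne_zero.2 hr.ne'
  have hν0 : (ν : ℂ) ≠ 0 := Nat.cast_ne_zero.2 hν'.ne'
  have hsq : S * S = (r : ℂ) := by
    rw [hS, ← Complex.ofReal_mul, Real.mul_self_sqrt (by positivity : (0:ℝ) ≤ (r:ℝ))]
    norm_cast
  have hI4 : Complex.I ^ (4 * c) = 1 := by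
    rw [pow_mul, show Complex.I ^ 4 = 1 from by
      rw [show (4 : ℕ) = 2 * 2 from rfl, pow_mul, Complex.I_sq]; norm_num, one_pow]
  have h1 : Complex.I ^ (3 * c) * Complex.I ^ c = 1 := by
    rw [← pow_add, show 3 * c + c = 4 * c from by ring, hI4]
  have h2 : S ^ r * S ^ r = (r : ℂ) ^ r := by
    rw [← mul_pow, hsq]
  have hM : ((r * ν : ℕ) : ℂ) = (r : ℂ) * (ν : ℂ) := by push_cast; ring
  have hcoef : Complex.I ^ (3 * c) * ((Real.sqrt r ^ r : ℝ) : ℂ) * ((((r * ν : ℕ) : ℂ))⁻¹) ^ r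
      = Complex.I ^ (-(c : ℤ)) * (((ν : ℂ) * S) ^ (-(r : ℤ))) := by
    rw [show ((Real.sqrt r ^ r : ℝ) : ℂ) = S ^ r from by rw [hS]; push_cast; rfl,
      zpow_neg, zpow_natCast, zpow_neg, zpow_natCast, hM, inv_pow]
    have key : (Complex.I ^ c * ((ν : ℂ) * S) ^ r) *
        (Complex.I ^ (3 * c) * S ^ r * ((((r : ℂ) * (ν : ℂ)) ^ r))⁻¹) = 1 := by
      have hrr : ((r : ℂ) ^ r * (ν : ℂ) ^ r) ≠ 0 :=
        mul_ne_zero (pow_ne_zero _ hr0) (pow_ne_zero _ hν0)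
      rw [mul_pow, mul_pow]
      calc (Complex.I ^ c * ((ν : ℂ) ^ r * S ^ r)) *
            (Complex.I ^ (3 * c) * S ^ r * (((r : ℂ) ^ r * (ν : ℂ) ^ r))⁻¹)
          = (Complex.I ^ (3 * c) * Complex.I ^ c) * ((S ^ r * S ^ r) * (ν : ℂ) ^ r) *
              ((r : ℂ) ^ r * (ν : ℂ) ^ r)⁻¹ := by ring
        _ = ((r : ℂ) ^ r * (ν : ℂ) ^ r) * ((r : ℂ) ^ r * (ν : ℂ) ^ r)⁻¹ := by
              rw [h1, h2, one_mul]
        _ = 1 := mul_inv_cancel₀ hrr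
    rw [eq_comm, ← mul_inv]
    exact (inv_eq_of_mul_eq_one_right key)
  rw [← mul_assoc, hcoef]
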